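/- Suppose f_n → f pointwise and uniformly on every compact interval of ℝ, each f_n is non-negative, even, non-increasing on (0,∞), ∫ f_n² ≤ M uniformly, and ∫ |λ| f_n^γ dy = |W|/Ω_{D−1} for all n. Then ∫ |λ| f^γ dy = |W|/Ω_{D−1}; i.e., the potential functional is preserved in the limit (no mass escapes to infinity). -/

import Mathlib

open MeasureTheory Real Filter Topology

noncomputable section

private lemma rpow_le_two_rpow_aux {γ x y : ℝ} (hγ : 0 ≤ γ) (hx : 0 ≤ x) (hy : 0 ≤ y)
    (h : x ≤ y + 1) : x ^ γ ≤ 2 ^ γ * (y ^ γ + 1) := by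
  have hmax : (0:ℝ) ≤ max y 1 := le_trans zero_le_one (le_max_right _ _)
  have h2 : x ≤ 2 * max y 1 := by
    have h1 := le_max_left y 1
    have h2' := le_max_right y 1
    nlinarith
  have hmax' : (max y 1) ^ γ ≤ y ^ γ + 1 := by
    rcases le_total y 1 with hle | hle
    · rw [max_eq_right hle, Real.one_rpow]
      have := Real.rpow_nonneg hy γ
      linarith
    · rw [max_eq_left hle]
      linarith [Real.rpow_nonneg hy γ]
  calc x ^ γ ≤ (2 * max y 1) ^ γ := Real.rpow_le_rpow hx h2 hγ
    _ = 2 ^ γ * (max y 1) ^ γ := Real.mul_rpow (by norm_num) hmax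
    _ ≤ 2 ^ γ * (y ^ γ + 1) := by
        exact mul_le_mul_of_nonneg_left hmax' (Real.rpow_nonneg (by norm_num) γ)

/-- No mass escapes to infinity: if `f_n → f` pointwise and uniformly on compacts, the `f_n`
are non-negative, even, non-increasing on `(0,∞)`, uniformly bounded in `L²`, and
`∫ |λ| f_n^γ = |W|/Ω_{D-1}` for all `n`, then `∫ |λ| f^γ = |W|/Ω_{D-1}`. -/
theorem potential_preserved_in_limit (D : ℕ) (hD : 2 < D) (lam W Ω M : ℝ)
    (hlam : lam < 0) (hW : W < 0) (hΩ : 0 < Ω) (hM : 0 ≤ M)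
    (γ : ℝ) (hγ : γ = 2 * (D : ℝ) / ((D : ℝ) - 2))
    (f : ℕ → ℝ → ℝ) (g : ℝ → ℝ)
    (hnn : ∀ n y, 0 ≤ f n y)
    (heven : ∀ n y, f n (-y) = f n y)
    (hmono : ∀ n, AntitoneOn (f n) (Set.Ioi (0 : ℝ)))
    (hconv_pt : ∀ y, Tendsto (fun n => f n y) atTop (nhds (g y)))
    (hconv_unif : ∀ K : Set ℝ, IsCompact K → TendstoUniformlyOn (fun n => f n) g atTop K)
    (hL2 : ∀ n, Integrable (fun y => (f n y) ^ 2))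
    (hL2bd : ∀ n, ∫ y : ℝ, (f n y) ^ 2 ≤ M)
    (hγint : ∀ n, Integrable (fun y => |lam| * (f n y) ^ γ))
    (hfix : ∀ n, ∫ y : ℝ, |lam| * (f n y) ^ γ = |W| / Ω) :
    ∫ y : ℝ, |lam| * (g y) ^ γ = |W| / Ω := by
  have hD2 : (0:ℝ) < (D:ℝ) - 2 := by
    have : (2:ℝ) < (D:ℝ) := by exact_mod_cast hD
    linarith
  have hγ2 : 2 < γ := by
    rw [hγ]
    rw [lt_div_iff₀ hD2]
    have : (2:ℝ) < (D:ℝ) := by exact_mod_cast hD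
    linarith
  have hγpos : 0 < γ := by linarith
  have hγnn : 0 ≤ γ := hγpos.le
  have hlam' : 0 < |lam| := abs_pos.mpr (ne_of_lt hlam)
  set cc : ℝ := γ / 2 with hcc_def
  have hcc : 1 < cc := by
    rw [hcc_def]; linarith
  -- pointwise decay bound for f n
  have hbd0 : ∀ n (y : ℝ), 0 < y → f n y ≤ Real.sqrt (M / y) := by
    intro n y hy
    have hconst : ∫ _ in Set.Ioc (0:ℝ) y, ((f n y) ^ 2 : ℝ) = y * (f n y) ^ 2 := by
      rw [setIntegral_const]
      simp [Real.volume_Ioc, ENNReal.toReal_ofReal hy.le, hy.le]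
    have h1 : ∫ _ in Set.Ioc (0:ℝ) y, ((f n y) ^ 2 : ℝ) ≤ ∫ t in Set.Ioc (0:ℝ) y, (f n t) ^ 2 := by
      refine setIntegral_mono_on (integrableOn_const (ne_of_lt ?_)) ((hL2 n).integrableOn)
        measurableSet_Ioc ?_
      · rw [Real.volume_Ioc]; exact ENNReal.ofReal_lt_top
      · intro t ht
        have hft : f n y ≤ f n t := hmono n ht.1 hy (ht.2)
        exact pow_le_pow_left₀ (hnn n y) hft 2
    have h2 : ∫ t in Set.Ioc (0:ℝ) y, (f n t) ^ 2 ≤ ∫ t : ℝ, (f n t) ^ 2 :=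
      setIntegral_le_integral (hL2 n) (Filter.Eventually.of_forall fun t => sq_nonneg _)
    have key : y * (f n y) ^ 2 ≤ M := by
      rw [← hconst]
      exact le_trans h1 (le_trans h2 (hL2bd n))
    rw [Real.le_sqrt (hnn n y) (div_nonneg hM hy.le)]
    rw [le_div_iff₀ hy]
    nlinarith
  have hfeven : ∀ n (y : ℝ), f n y = f n (-y) := by
    intro n y
    have := heven n (-y)
    rw [neg_neg] at this
    exact this
  have hbd : ∀ n (y : ℝ), y ≠ 0 → f n y ≤ Real.sqrt (M / |y|) := by
    intro n y hy
    rcases lt_or_gt_of_ne hy with hneg | hpos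
    · rw [abs_of_neg hneg, hfeven n y]
      exact hbd0 n (-y) (by linarith)
    · rw [abs_of_pos hpos]
      exact hbd0 n y hpos
  have hgnn : ∀ y, 0 ≤ g y := fun y =>
    le_of_tendsto_of_tendsto tendsto_const_nhds (hconv_pt y)
      (Filter.Eventually.of_forall fun n => hnn n y)
  have hgbd : ∀ y : ℝ, y ≠ 0 → g y ≤ Real.sqrt (M / |y|) := fun y hy =>
    le_of_tendsto (hconv_pt y) (Filter.Eventually.of_forall fun n => hbd n y hy)
  have hgeven : ∀ y, g (-y) = g y := by
    intro y
    have h1 := hconv_pt (-y)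
    simp only [heven] at h1
    exact tendsto_nhds_unique h1 (hconv_pt y)
  -- the sqrt bound raised to power γ
  have hsq : ∀ y : ℝ, y ≠ 0 → Real.sqrt (M / |y|) ^ γ = M ^ cc * |y| ^ (-cc) := by
    intro y hy
    have hay : 0 < |y| := abs_pos.mpr hy
    rw [Real.sqrt_eq_rpow, ← Real.rpow_mul (div_nonneg hM hay.le)]
    have : 1 / 2 * γ = cc := by rw [hcc_def]; ring
    rw [this, Real.div_rpow hM hay.le, Real.rpow_neg hay.le, div_eq_mul_inv]
  -- pointwise bounds with the concrete integrable majorant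
  set F : ℕ → ℝ → ℝ := fun n y => |lam| * (f n y) ^ γ with hF_def
  set G : ℝ → ℝ := fun y => |lam| * (g y) ^ γ with hG_def
  have hFnn : ∀ n y, 0 ≤ F n y := fun n y =>
    mul_nonneg hlam'.le (Real.rpow_nonneg (hnn n y) γ)
  have hGnn : ∀ y, 0 ≤ G y := fun y => mul_nonneg hlam'.le (Real.rpow_nonneg (hgnn y) γ)
  have hFbd : ∀ n (y : ℝ), y ≠ 0 → F n y ≤ |lam| * (M ^ cc * |y| ^ (-cc)) := by
    intro n y hy
    refine mul_le_mul_of_nonneg_left ?_ hlam'.le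
    rw [← hsq y hy]
    exact Real.rpow_le_rpow (hnn n y) (hbd n y hy) hγnn
  have hGbd : ∀ y : ℝ, y ≠ 0 → G y ≤ |lam| * (M ^ cc * |y| ^ (-cc)) := by
    intro y hy
    refine mul_le_mul_of_nonneg_left ?_ hlam'.le
    rw [← hsq y hy]
    exact Real.rpow_le_rpow (hgnn y) (hgbd y hy) hγnn
  have hFeven : ∀ n (y : ℝ), F n (-y) = F n y := by
    intro n y; simp only [hF_def, heven]
  have hGeven : ∀ y : ℝ, G (-y) = G y := by
    intro y; simp only [hG_def, hgeven]
  -- measurability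
  have hgm : AEMeasurable g (volume : Measure ℝ) := by
    have hfm : ∀ n, AEMeasurable (f n) (volume : Measure ℝ) := by
      intro n
      have h1 : AEMeasurable (fun y => |lam| * (f n y) ^ γ) (volume : Measure ℝ) :=
        (hγint n).aemeasurable
      have h2 : AEMeasurable (fun y => (|lam|⁻¹ * (|lam| * (f n y) ^ γ)) ^ γ⁻¹)
          (volume : Measure ℝ) :=
        (Real.continuous_rpow_const (inv_nonneg.mpr hγnn)).measurable.comp_aemeasurable
          (h1.const_mul _)
      have : (fun y => (|lam|⁻¹ * (|lam| * (f n y) ^ γ)) ^ γ⁻¹) = f n := by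
        funext y
        rw [← mul_assoc, inv_mul_cancel₀ (ne_of_gt hlam'), one_mul,
          ← Real.rpow_mul (hnn n y), mul_inv_cancel₀ (ne_of_gt hγpos), Real.rpow_one]
      rwa [this] at h2
    exact aemeasurable_of_tendsto_metrizable_ae' hfm (Filter.Eventually.of_forall hconv_pt)
  have hGsm : AEStronglyMeasurable G (volume : Measure ℝ) := by
    have : AEMeasurable (fun y => (g y) ^ γ) (volume : Measure ℝ) :=
      (Real.continuous_rpow_const hγnn).measurable.comp_aemeasurable hgm
    exact (this.const_mul _).aestronglyMeasurable
  -- the integrable tail majorant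
  have hcc' : -cc < -1 := by linarith
  have htail_int : ∀ r : ℝ, 0 < r →
      IntegrableOn (fun y : ℝ => |lam| * (M ^ cc * y ^ (-cc))) (Set.Ioi r) := by
    intro r hr
    exact (((integrableOn_Ioi_rpow_of_lt hcc' hr).const_mul (M ^ cc)).const_mul |lam|)
  -- Integrability of G on ℝ
  have hGIoi : IntegrableOn G (Set.Ioi (1:ℝ)) := by
    refine Integrable.mono' (htail_int 1 one_pos) hGsm.restrict ?_
    refine (ae_restrict_iff' measurableSet_Ioi).mpr (Filter.Eventually.of_forall ?_)
    intro y hy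
    have hy1 : (1:ℝ) < y := hy
    have hyne : y ≠ 0 := by linarith
    rw [Real.norm_eq_abs, abs_of_nonneg (hGnn y)]
    have := hGbd y hyne
    rwa [abs_of_pos (by linarith : (0:ℝ) < y)] at this
  have hGIio : IntegrableOn G (Set.Iio (-1:ℝ)) := by
    have h1 : IntegrableOn (G ∘ Neg.neg) (Neg.neg ⁻¹' (Set.Ioi (1:ℝ))) :=
      ((Measure.measurePreserving_neg (volume : Measure ℝ)).integrableOn_comp_preimage
        (Homeomorph.neg ℝ).measurableEmbedding).2 hGIoi
    have h2 : (G ∘ Neg.neg) = G := by funext y; exact hGeven y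
    have h3 : (Neg.neg ⁻¹' (Set.Ioi (1:ℝ)) : Set ℝ) = Set.Iio (-1) := by
      ext x
      simp only [Set.mem_preimage, Set.mem_Ioi, Set.mem_Iio]
      constructor <;> intro h <;> linarith
    rwa [h2, h3] at h1
  have hGIcc : IntegrableOn G (Set.Icc (-1:ℝ) 1) := by
    obtain ⟨N, hN⟩ := (Metric.tendstoUniformlyOn_iff.mp (hconv_unif (Set.Icc (-1:ℝ) 1) isCompact_Icc) 1 one_pos).exists
    set dom : ℝ → ℝ := fun y => 2 ^ γ * (|lam| * (f N y) ^ γ) + |lam| * 2 ^ γ with hdom_def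
    have hdom_int : IntegrableOn dom (Set.Icc (-1:ℝ) 1) := by
      refine (((hγint N).restrict).const_mul _).add ?_
      refine integrableOn_const (ne_of_lt ?_)
      rw [Real.volume_Icc]; exact ENNReal.ofReal_lt_top
    refine Integrable.mono' hdom_int hGsm.restrict ?_
    refine (ae_restrict_iff' measurableSet_Icc).mpr (Filter.Eventually.of_forall ?_)
    intro y hy
    rw [Real.norm_eq_abs, abs_of_nonneg (hGnn y)]
    have hdist := hN y hy
    rw [Real.dist_eq, abs_sub_lt_iff] at hdist
    have hgle : g y ≤ f N y + 1 := by linarith [hdist.1]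
    have := rpow_le_two_rpow_aux hγnn (hgnn y) (hnn N y) hgle
    have h2 : G y ≤ |lam| * (2 ^ γ * ((f N y) ^ γ + 1)) :=
      mul_le_mul_of_nonneg_left this hlam'.le
    calc G y ≤ |lam| * (2 ^ γ * ((f N y) ^ γ + 1)) := h2
      _ = dom y := by rw [hdom_def]; ring
  have hGint : Integrable G := by
    have hcover : (Set.Iio (-1:ℝ) ∪ Set.Icc (-1) 1 ∪ Set.Ioi 1) = Set.univ := by
      ext x
      simp only [Set.mem_union, Set.mem_Iio, Set.mem_Icc, Set.mem_Ioi, Set.mem_univ, iff_true]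
      rcases lt_or_ge x (-1) with h | h
      · exact Or.inl (Or.inl h)
      · rcases le_or_gt x 1 with h2 | h2
        · exact Or.inl (Or.inr ⟨h, h2⟩)
        · exact Or.inr h2
    rw [← integrableOn_univ, ← hcover]
    exact (hGIio.union hGIcc).union hGIoi
  -- uniform tail bound
  set τ : ℝ → ℝ := fun r => |lam| * (M ^ cc * ∫ y in Set.Ioi r, y ^ (-cc)) with hτ_def
  have key : ∀ (Φ : ℝ → ℝ), Integrable Φ → (∀ y, 0 ≤ Φ y) → (∀ y, Φ (-y) = Φ y) →
      (∀ y : ℝ, y ≠ 0 → Φ y ≤ |lam| * (M ^ cc * |y| ^ (-cc))) →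
      ∀ r : ℝ, 0 < r → ∫ y in (Set.Icc (-r) r)ᶜ, Φ y ≤ 2 * τ r := by
    intro Φ hΦint hΦnn hΦeven hΦbd r hr
    have hIoi_bd : ∫ y in Set.Ioi r, Φ y ≤ τ r := by
      have hmono' : ∫ y in Set.Ioi r, Φ y ≤ ∫ y in Set.Ioi r, |lam| * (M ^ cc * y ^ (-cc)) := by
        refine setIntegral_mono_on hΦint.integrableOn (htail_int r hr) measurableSet_Ioi ?_
        intro y hy
        have hy' : (0:ℝ) < y := lt_trans hr hy
        have := hΦbd y (ne_of_gt hy')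
        rwa [abs_of_pos hy'] at this
      calc ∫ y in Set.Ioi r, Φ y ≤ ∫ y in Set.Ioi r, |lam| * (M ^ cc * y ^ (-cc)) := hmono'
        _ = τ r := by
            show _ = |lam| * (M ^ cc * ∫ y in Set.Ioi r, y ^ (-cc))
            rw [← integral_const_mul, ← integral_const_mul]
    have hIio_eq : ∫ y in Set.Iio (-r), Φ y = ∫ y in Set.Ioi r, Φ y := by
      rw [← integral_Iic_eq_integral_Iio]
      rw [← integral_comp_neg_Ioi r Φ]
      congr 1
      funext y
      exact hΦeven y
    have hcompl : (Set.Icc (-r) r)ᶜ = Set.Iio (-r) ∪ Set.Ioi r := by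
      ext x
      simp only [Set.mem_compl_iff, Set.mem_Icc, Set.mem_union, Set.mem_Iio, Set.mem_Ioi,
        not_and_or, not_le]
    rw [hcompl]
    rw [setIntegral_union ?hd measurableSet_Ioi hΦint.integrableOn hΦint.integrableOn]
    case hd =>
      rw [Set.disjoint_left]
      intro x hx1 hx2
      simp only [Set.mem_Iio] at hx1
      simp only [Set.mem_Ioi] at hx2
      linarith
    rw [hIio_eq]
    linarith
  -- the tail of F n determines how far ∫_{B k} F n is from |W|/Ω
  have hcompl_nn : ∀ (Φ : ℝ → ℝ), (∀ y, 0 ≤ Φ y) → ∀ r : ℝ,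
      0 ≤ ∫ y in (Set.Icc (-r) r)ᶜ, Φ y := by
    intro Φ hΦnn r
    exact setIntegral_nonneg measurableSet_Icc.compl fun y _ => hΦnn y
  set B : ℕ → Set ℝ := fun k => Set.Icc (-((k:ℝ)+1)) ((k:ℝ)+1) with hB_def
  have hFsplit : ∀ n k, |(∫ y in B k, F n y) - |W| / Ω| ≤ 2 * τ ((k:ℝ)+1) := by
    intro n k
    have hkpos : (0:ℝ) < (k:ℝ) + 1 := by positivity
    have hadd : (∫ y in B k, F n y) + ∫ y in (B k)ᶜ, F n y = |W| / Ω := by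
      rw [← hfix n]
      exact integral_add_compl measurableSet_Icc (hγint n)
    have hb1 : ∫ y in (B k)ᶜ, F n y ≤ 2 * τ ((k:ℝ)+1) :=
      key (F n) (hγint n) (hFnn n) (hFeven n) (hFbd n) _ hkpos
    have hb2 : 0 ≤ ∫ y in (B k)ᶜ, F n y := hcompl_nn (F n) (hFnn n) _
    rw [abs_le]
    constructor <;> linarith
  -- dominated convergence on each B k
  have hdct : ∀ k : ℕ, Tendsto (fun n => ∫ y in B k, F n y) atTop (𝓝 (∫ y in B k, G y)) := by
    intro k
    set bound : ℝ → ℝ := fun y => 2 ^ γ * G y + |lam| * 2 ^ γ with hbound_def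
    refine tendsto_integral_filter_of_dominated_convergence bound ?_ ?_ ?_ ?_
    · exact Filter.Eventually.of_forall fun n => (hγint n).aestronglyMeasurable.restrict
    · have hunif := Metric.tendstoUniformlyOn_iff.mp (hconv_unif (B k) isCompact_Icc) 1 one_pos
      refine hunif.mono ?_
      intro n hn
      refine (ae_restrict_iff' measurableSet_Icc).mpr (Filter.Eventually.of_forall ?_)
      intro y hy
      have hdist := hn y hy
      rw [Real.dist_eq, abs_sub_lt_iff] at hdist
      have hfle : f n y ≤ g y + 1 := by linarith [hdist.2]
      rw [Real.norm_eq_abs, abs_of_nonneg (hFnn n y)]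
      have := rpow_le_two_rpow_aux hγnn (hnn n y) (hgnn y) hfle
      have h2 : F n y ≤ |lam| * (2 ^ γ * ((g y) ^ γ + 1)) :=
        mul_le_mul_of_nonneg_left this hlam'.le
      calc F n y ≤ |lam| * (2 ^ γ * ((g y) ^ γ + 1)) := h2
        _ = bound y := by rw [hbound_def, hG_def]; ring
    · refine ((hGint.restrict).const_mul _).add ?_
      refine integrableOn_const (ne_of_lt ?_)
      rw [hB_def, Real.volume_Icc]; exact ENNReal.ofReal_lt_top
    · refine Filter.Eventually.of_forall fun y => ?_
      exact ((hconv_pt y).rpow_const (Or.inr hγnn)).const_mul _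
  -- limits over the exhaustion
  have hBmono : Monotone B := by
    intro k l hkl
    refine Set.Icc_subset_Icc ?_ ?_
    · simp only [neg_le_neg_iff]
      exact add_le_add_left (by exact_mod_cast hkl : (k:ℝ) ≤ l) 1
    · exact add_le_add_left (by exact_mod_cast hkl : (k:ℝ) ≤ l) 1
  have hBunion : ⋃ k, B k = Set.univ := by
    refine Set.eq_univ_of_forall fun x => ?_
    obtain ⟨k, hk⟩ := exists_nat_ge |x|
    refine Set.mem_iUnion.mpr ⟨k, ?_⟩
    have h1 : |x| ≤ (k:ℝ) + 1 := by linarith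
    rw [abs_le] at h1
    exact ⟨h1.1, h1.2⟩
  have hlim1 : Tendsto (fun k => ∫ y in B k, G y) atTop (𝓝 (∫ y, G y)) := by
    have h := tendsto_setIntegral_of_monotone (fun k => measurableSet_Icc) hBmono
      (by rw [hBunion]; exact hGint.integrableOn)
    rwa [hBunion, setIntegral_univ] at h
  -- the tail bound tends to zero
  have hτlim : Tendsto (fun k : ℕ => 2 * τ ((k:ℝ)+1)) atTop (𝓝 0) := by
    have hval : ∀ k : ℕ, 2 * τ ((k:ℝ)+1)
        = (2 * (|lam| * M ^ cc) / (cc - 1)) * ((k:ℝ)+1) ^ (-(cc-1)) := by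
      intro k
      have hkpos : (0:ℝ) < (k:ℝ) + 1 := by positivity
      have hInt : ∫ y in Set.Ioi ((k:ℝ)+1), y ^ (-cc)
          = -((k:ℝ)+1) ^ (-cc + 1) / (-cc + 1) := integral_Ioi_rpow_of_lt hcc' hkpos
      have h1 : -cc + 1 = -(cc-1) := by ring
      rw [h1] at hInt
      show 2 * (|lam| * (M ^ cc * ∫ y in Set.Ioi ((k:ℝ)+1), y ^ (-cc))) = _
      rw [hInt, neg_div_neg_eq]
      have hne : cc - 1 ≠ 0 := by linarith
      field_simp
    have hcast : Tendsto (fun k : ℕ => (k:ℝ) + 1) atTop atTop :=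
      tendsto_atTop_add_const_right atTop 1 tendsto_natCast_atTop_atTop
    have h0 : Tendsto (fun k : ℕ => ((k:ℝ)+1) ^ (-(cc-1))) atTop (𝓝 0) :=
      (tendsto_rpow_neg_atTop (by linarith : (0:ℝ) < cc - 1)).comp hcast
    have := h0.const_mul (2 * (|lam| * M ^ cc) / (cc - 1))
    rw [mul_zero] at this
    exact this.congr fun k => (hval k).symm
  -- conclude
  have hψbd : ∀ k : ℕ, |(∫ y in B k, G y) - |W| / Ω| ≤ 2 * τ ((k:ℝ)+1) := by
    intro k
    have htend : Tendsto (fun n => |(∫ y in B k, F n y) - |W| / Ω|) atTop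
        (𝓝 |(∫ y in B k, G y) - |W| / Ω|) := ((hdct k).sub_const _).abs
    exact le_of_tendsto htend (Filter.Eventually.of_forall fun n => hFsplit n k)
  have hψlim : Tendsto (fun k => ∫ y in B k, G y) atTop (𝓝 (|W| / Ω)) := by
    have h1 : Tendsto (fun k => (∫ y in B k, G y) - |W| / Ω) atTop (𝓝 0) := by
      refine squeeze_zero_norm (fun k => ?_) hτlim
      rw [Real.norm_eq_abs]
      exact hψbd k
    have := h1.add_const (|W| / Ω)
    simp only [sub_add_cancel, zero_add] at this
    exact this
  exact tendsto_nhds_unique hlim1 hψlim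

end
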